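/- arXiv:2208.04490 — 3 statements merged into one kernel-verified Lean document; each statement's English description precedes it below -/
import Mathlib

section
/- Suppose F(z) has a power series expansion at the origin with only finitely many negative coefficients, converging in a neighborhood of the origin. If y ∈ (C^*)^d is a minimal point of the zero set of the denominator H (i.e., H(y) = 0 and no zero of H is coordinate-wise strictly smaller in modulus), then (|y_1|, ..., |y_d|) is also a zero of H and is also a minimal point. -/
open MvPolynomial
open scoped NNReal

noncomputable instance fiberFintype (d n : ℕ) :
    Fintype {i : Fin d →₀ ℕ // (∑ j, i j) = n} := by
  apply Fintype.ofInjective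
    (fun i : {i : Fin d →₀ ℕ // (∑ j, i j) = n} =>
      (fun j => (⟨i.1 j, by
        have h1 : i.1 j ≤ ∑ j', i.1 j' :=
          Finset.single_le_sum (fun _ _ => Nat.zero_le _) (Finset.mem_univ j)
        have h2 := i.2
        omega⟩ : Fin (n+1)) : Fin d → Fin (n+1)))
  intro i i' h
  apply Subtype.ext
  ext j
  have := congrFun h j
  simpa [Fin.mk.injEq] using this

theorem hasSum_group {d : ℕ} {α : Type*} [AddCommGroup α] [TopologicalSpace α]
    [IsTopologicalAddGroup α] [T3Space α]
    {g : (Fin d →₀ ℕ) → α} {s : α} (hg : HasSum g s) :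
    HasSum (fun n => ∑ i : {i : Fin d →₀ ℕ // (∑ j, i j) = n}, g i.1) s := by
  have hg' : HasSum (fun p : Σ n, {i : Fin d →₀ ℕ // (∑ j, i j) = n} => g p.2.1) s :=
    (Equiv.hasSum_iff (Equiv.sigmaFiberEquiv (fun i : Fin d →₀ ℕ => ∑ j, i j))).2 hg
  exact hg'.sigma fun n => hasSum_fintype _

theorem eval_lineSub {d : ℕ} (v : Fin d → ℂ) (P : MvPolynomial (Fin d) ℂ) (t : ℂ) :
    Polynomial.eval t (MvPolynomial.aeval (fun j => Polynomial.C (v j) * Polynomial.X) P)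
      = MvPolynomial.eval (fun j => t * v j) P := by
  induction P using MvPolynomial.induction_on with
  | C a => rw [MvPolynomial.aeval_C, MvPolynomial.eval_C]; simp [Polynomial.algebraMap_eq]
  | add p q hp hq => rw [map_add, map_add, Polynomial.eval_add, hp, hq]
  | mul_X p j hp =>
      rw [map_mul, map_mul, Polynomial.eval_mul, hp, MvPolynomial.aeval_X, MvPolynomial.eval_X,
        Polynomial.eval_mul, Polynomial.eval_C, Polynomial.eval_X]
      ring

theorem key_unitdisc (P Q : Polynomial ℂ) (a : ℕ → ℂ) (ε₁ : ℝ) (hε₁ : 0 < ε₁)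
    (hQ : ∀ t : ℂ, ‖t‖ < 1 → Polynomial.eval t Q ≠ 0)
    (hsmall : ∀ t : ℂ, ‖t‖ < ε₁ →
      HasSum (fun n => a n * t ^ n) (Polynomial.eval t P / Polynomial.eval t Q)) :
    ∀ t : ℂ, ‖t‖ < 1 →
      HasSum (fun n => a n * t ^ n) (Polynomial.eval t P / Polynomial.eval t Q) := by
  intro t ht
  set F : ℂ → ℂ := fun z => Polynomial.eval z P / Polynomial.eval z Q with hF
  obtain ⟨R, hR1, hR2⟩ : ∃ R : ℝ≥0, ‖t‖ < R ∧ (R : ℝ) < 1 := by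
    refine ⟨Real.toNNReal ((‖t‖ + 1) / 2), ?_, ?_⟩ <;>
      · rw [Real.coe_toNNReal _ (by positivity)]
        have := norm_nonneg t
        linarith
  have hRpos : 0 < R := by
    rw [← NNReal.coe_pos]
    exact lt_of_le_of_lt (norm_nonneg t) hR1
  have hdiff : DifferentiableOn ℂ F (Metric.closedBall 0 R) := by
    apply DifferentiableOn.div
    · exact (Polynomial.differentiable P).differentiableOn
    · exact (Polynomial.differentiable Q).differentiableOn
    · intro z hz
      apply hQ
      have hz' : ‖z‖ ≤ R := by simpa using Metric.mem_closedBall.mp hz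
      linarith
  have h1 : HasFPowerSeriesOnBall F (cauchyPowerSeries F 0 R) 0 R :=
    hdiff.hasFPowerSeriesOnBall hRpos
  have hcoeff : ∀ n, (FormalMultilinearSeries.ofScalars ℂ a).coeff n = a n := by
    intro n
    show (FormalMultilinearSeries.ofScalars ℂ a n) (fun _ => 1) = a n
    rw [FormalMultilinearSeries.ofScalars_apply_eq]
    simp
  have h3 : HasFPowerSeriesAt F (FormalMultilinearSeries.ofScalars ℂ a) 0 := by
    rw [hasFPowerSeriesAt_iff]
    filter_upwards [Metric.ball_mem_nhds (0:ℂ) hε₁] with z hz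
    have hz' : ‖z‖ < ε₁ := by simpa using hz
    have hh := hsmall z hz'
    simp only [hcoeff, smul_eq_mul, zero_add]
    convert hh using 2 with n
    · rfl
    ring
  have h4 : cauchyPowerSeries F 0 R = FormalMultilinearSeries.ofScalars ℂ a :=
    h1.hasFPowerSeriesAt.eq_formalMultilinearSeries h3
  have hmem : t ∈ Metric.eball (0:ℂ) R := by
    rw [Metric.mem_eball, edist_zero_right]
    have h6 : ‖t‖₊ < R := by
      rw [← NNReal.coe_lt_coe]
      simpa using hR1
    exact_mod_cast h6
  have h5 := h1.hasSum hmem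
  rw [h4] at h5
  simpa only [FormalMultilinearSeries.ofScalars_apply_eq, smul_eq_mul, zero_add] using h5

/-- If F = G/H has a power series expansion at the origin with only finitely
many negative coefficients, and y ∈ (ℂ*)^d is a minimal zero of H, then
(|y₁|,…,|y_d|) is also a zero of H and is also minimal. -/
theorem stmt7 (d : ℕ) (G H : MvPolynomial (Fin d) ℂ) (hcop : IsCoprime G H)
    (h0 : eval 0 H ≠ 0) (f : (Fin d →₀ ℕ) → ℝ) (ε : ℝ) (hε : 0 < ε)
    (hconv : ∀ z : Fin d → ℂ, (∀ j, ‖z j‖ < ε) →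
      HasSum (fun i : Fin d →₀ ℕ => (f i : ℂ) * ∏ j, z j ^ i j)
        (eval z G / eval z H))
    (hfin : {i | f i < 0}.Finite)
    (y : Fin d → ℂ) (hy0 : ∀ j, y j ≠ 0) (hyH : eval y H = 0)
    (hymin : ¬ ∃ z : Fin d → ℂ, eval z H = 0 ∧
      ∀ j, ‖z j‖ < ‖y j‖) :
    eval (fun j => (‖y j‖ : ℂ)) H = 0 ∧
    ¬ ∃ z : Fin d → ℂ, eval z H = 0 ∧
      ∀ j, ‖z j‖ < ‖((‖y j‖ : ℂ))‖ := by
  constructor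
  swap
  · simpa only [Complex.norm_real, norm_norm] using hymin
  by_contra hA
  set r : Fin d → ℝ := fun j => ‖y j‖ with hr
  have hrpos : ∀ j, 0 < r j := fun j => norm_pos_iff.mpr (hy0 j)
  have hmin' : ∀ w : Fin d → ℂ, (∀ j, ‖w j‖ < r j) → eval w H ≠ 0 :=
    fun w hw h => hymin ⟨w, h, hw⟩
  have hGy : eval y G ≠ 0 := by
    intro h
    obtain ⟨u, v, huv⟩ := hcop
    have h2 := congrArg (eval y) huv
    simp only [map_add, map_mul, map_one, h, hyH, mul_zero, add_zero, zero_add] at h2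
    exact one_ne_zero h2.symm
  set rC : Fin d → ℂ := fun j => (r j : ℂ) with hrC
  have hrCabs : ∀ j, ‖rC j‖ = r j := by
    intro j
    rw [hrC, Complex.norm_real, Real.norm_of_nonneg (hrpos j).le]
  set Sr : ℝ := ∑ j, r j with hSr
  have hSr0 : 0 ≤ Sr := Finset.sum_nonneg fun j _ => (hrpos j).le
  set ε₁ : ℝ := ε / (1 + Sr) with hε₁def
  have hε₁ : 0 < ε₁ := div_pos hε (by linarith)
  have hsmall : ∀ (v : Fin d → ℂ), (∀ j, ‖v j‖ = r j) → ∀ t : ℂ,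
      ‖t‖ < ε₁ →
      HasSum (fun n => (∑ i : {i : Fin d →₀ ℕ // (∑ j, i j) = n},
          (f i.1 : ℂ) * ∏ j, v j ^ i.1 j) * t ^ n)
        (Polynomial.eval t (MvPolynomial.aeval (fun j => Polynomial.C (v j) * Polynomial.X) G) /
         Polynomial.eval t (MvPolynomial.aeval (fun j => Polynomial.C (v j) * Polynomial.X) H)) := by
    intro v hv t ht
    have hz : ∀ j, ‖t * v j‖ < ε := by
      intro j
      rw [norm_mul, hv j]
      have hrj : r j ≤ Sr := Finset.single_le_sum (fun j _ => (hrpos j).le) (Finset.mem_univ j)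
      calc ‖t‖ * r j ≤ ‖t‖ * (1 + Sr) := by
            apply mul_le_mul_of_nonneg_left (by linarith) (norm_nonneg t)
        _ < ε₁ * (1 + Sr) := by
            apply mul_lt_mul_of_pos_right ht (by linarith)
        _ = ε := by
            rw [hε₁def]
            field_simp
    have h1 := hconv (fun j => t * v j) hz
    rw [← eval_lineSub, ← eval_lineSub] at h1
    have h2 := hasSum_group h1
    have h3 : (fun n => (∑ i : {i : Fin d →₀ ℕ // (∑ j, i j) = n},
        (f i.1 : ℂ) * ∏ j, v j ^ i.1 j) * t ^ n)
        = fun n => ∑ i : {i : Fin d →₀ ℕ // (∑ j, i j) = n},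
          (f i.1 : ℂ) * ∏ j, (t * v j) ^ i.1 j := by
      funext n
      rw [Finset.sum_mul]
      apply Finset.sum_congr rfl
      intro i _
      have hprod : ∏ j, (t * v j) ^ i.1 j = t ^ n * ∏ j, v j ^ i.1 j := by
        simp_rw [mul_pow]
        rw [Finset.prod_mul_distrib, Finset.prod_pow_eq_pow_sum, i.2]
      rw [hprod]
      ring
    rw [h3]
    exact h2
  -- line polynomials
  set Gy : Polynomial ℂ := MvPolynomial.aeval (fun j => Polynomial.C (y j) * Polynomial.X) G
    with hGydef
  set Hy : Polynomial ℂ := MvPolynomial.aeval (fun j => Polynomial.C (y j) * Polynomial.X) H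
    with hHydef
  set Gr : Polynomial ℂ := MvPolynomial.aeval (fun j => Polynomial.C (rC j) * Polynomial.X) G
    with hGrdef
  set Hr : Polynomial ℂ := MvPolynomial.aeval (fun j => Polynomial.C (rC j) * Polynomial.X) H
    with hHrdef
  set aC : ℕ → ℂ := fun n => ∑ i : {i : Fin d →₀ ℕ // (∑ j, i j) = n},
      (f i.1 : ℂ) * ∏ j, y j ^ i.1 j with haCdef
  set bR : ℕ → ℝ := fun n => ∑ i : {i : Fin d →₀ ℕ // (∑ j, i j) = n},
      f i.1 * ∏ j, r j ^ i.1 j with hbRdef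
  have hbC : ∀ n, (∑ i : {i : Fin d →₀ ℕ // (∑ j, i j) = n},
      (f i.1 : ℂ) * ∏ j, rC j ^ i.1 j) = ((bR n : ℝ) : ℂ) := by
    intro n
    rw [hbRdef]
    push_cast
    rfl
  -- nonvanishing of Hy, Hr on the unit disc
  have hQy : ∀ t : ℂ, ‖t‖ < 1 → Polynomial.eval t Hy ≠ 0 := by
    intro t ht
    rw [hHydef, eval_lineSub]
    apply hmin'
    intro j
    rw [norm_mul]
    exact mul_lt_of_lt_one_left (hrpos j) ht
  have hQr : ∀ t : ℂ, ‖t‖ < 1 → Polynomial.eval t Hr ≠ 0 := by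
    intro t ht
    rw [hHrdef, eval_lineSub]
    apply hmin'
    intro j
    rw [norm_mul, hrCabs j]
    exact mul_lt_of_lt_one_left (hrpos j) ht
  -- sums on the unit disc
  have haysum : ∀ t : ℂ, ‖t‖ < 1 →
      HasSum (fun n => aC n * t ^ n) (Polynomial.eval t Gy / Polynomial.eval t Hy) :=
    key_unitdisc Gy Hy aC ε₁ hε₁ hQy (fun t ht => hsmall y (fun j => rfl) t ht)
  have hbrsum : ∀ t : ℂ, ‖t‖ < 1 →
      HasSum (fun n => ((bR n : ℝ) : ℂ) * t ^ n)
        (Polynomial.eval t Gr / Polynomial.eval t Hr) := by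
    apply key_unitdisc Gr Hr _ ε₁ hε₁ hQr
    intro t ht
    have := hsmall rC hrCabs t ht
    simp only [hbC] at this
    exact this
  -- the cutoff N beyond which all coefficients are nonnegative
  set N : ℕ := (hfin.toFinset.sup (fun i => ∑ j, i j)) + 1 with hNdef
  have hfN : ∀ n, N ≤ n → ∀ i : {i : Fin d →₀ ℕ // (∑ j, i j) = n}, 0 ≤ f i.1 := by
    intro n hn i
    by_contra hneg
    push_neg at hneg
    have hi : i.1 ∈ hfin.toFinset := hfin.mem_toFinset.mpr hneg
    have hle : (∑ j, i.1 j) ≤ hfin.toFinset.sup (fun i : Fin d →₀ ℕ => ∑ j, i j) :=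
      Finset.le_sup (f := fun i : Fin d →₀ ℕ => ∑ j, i j) hi
    rw [hNdef] at hn
    have := i.2
    omega
  have hbnonneg : ∀ n, N ≤ n → 0 ≤ bR n := by
    intro n hn
    rw [hbRdef]
    apply Finset.sum_nonneg
    intro i _
    exact mul_nonneg (hfN n hn i)
      (Finset.prod_nonneg fun j _ => pow_nonneg (hrpos j).le _)
  have habsle : ∀ n, N ≤ n → ‖aC n‖ ≤ bR n := by
    intro n hn
    rw [haCdef, hbRdef]
    refine le_trans (norm_sum_le _ _) (le_of_eq ?_)
    apply Finset.sum_congr rfl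
    intro i _
    rw [norm_mul, Complex.norm_real, Real.norm_of_nonneg (hfN n hn i), norm_prod]
    congr 1
    apply Finset.prod_congr rfl
    intro j _
    rw [norm_pow]
  -- Hr does not vanish at 1
  have hHr1 : Polynomial.eval (1:ℂ) Hr ≠ 0 := by
    rw [hHrdef, eval_lineSub]
    have : (fun j => (1:ℂ) * rC j) = fun j => ((‖y j‖ : ℝ) : ℂ) := by
      funext j
      rw [one_mul, hrC]
    rw [this]
    exact hA
  -- bound on |Gr/Hr| on [0,1]
  obtain ⟨M, hM⟩ : ∃ M : ℝ, ∀ s ∈ Set.Icc (0:ℝ) 1,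
      ‖Polynomial.eval (s:ℂ) Gr / Polynomial.eval (s:ℂ) Hr‖ ≤ M := by
    apply IsCompact.exists_bound_of_continuousOn isCompact_Icc
    apply ContinuousOn.div
    · exact ((Gr.continuous_aeval.comp Complex.continuous_ofReal).continuousOn)
    · exact ((Hr.continuous_aeval.comp Complex.continuous_ofReal).continuousOn)
    · intro s hs
      rcases lt_or_eq_of_le hs.2 with h1 | h1
      · apply hQr
        rw [Complex.norm_real, Real.norm_of_nonneg hs.1]
        exact h1
      · rw [h1]
        exact_mod_cast hHr1
  -- real-coefficient sums on (0,1)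
  have hrealsum : ∀ s : ℝ, s ∈ Set.Ioo (0:ℝ) 1 →
      HasSum (fun n => bR n * s ^ n)
        ((Polynomial.eval (s:ℂ) Gr / Polynomial.eval (s:ℂ) Hr).re) := by
    intro s hs
    have habs : ‖(s:ℂ)‖ < 1 := by
      rw [Complex.norm_real, Real.norm_of_nonneg hs.1.le]
      exact hs.2
    have h := hbrsum (s:ℂ) habs
    have h2 := Complex.reCLM.hasSum h
    have heq : ∀ n, (((bR n : ℝ) : ℂ) * (s:ℂ) ^ n).re = bR n * s ^ n := by
      intro n
      have : ((bR n : ℝ) : ℂ) * (s:ℂ) ^ n = ((bR n * s ^ n : ℝ) : ℂ) := by push_cast; ring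
      rw [this, Complex.ofReal_re]
    simpa only [Complex.reCLM_apply, heq] using h2
  -- partial sums of the tail are uniformly bounded
  set C : ℝ := ∑ n ∈ Finset.range N, |bR n| with hCdef
  have hpartial : ∀ m : ℕ, ∑ n ∈ Finset.range m, bR (n + N) ≤ M + C := by
    intro m
    have htend : Filter.Tendsto
        (fun s : ℝ => ∑ n ∈ Finset.range m, bR (n + N) * s ^ (n + N))
        (nhdsWithin 1 (Set.Iio 1)) (nhds (∑ n ∈ Finset.range m, bR (n + N))) := by
      have hc : Continuous (fun s : ℝ => ∑ n ∈ Finset.range m, bR (n + N) * s ^ (n + N)) :=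
        continuous_finset_sum _ fun n _ => continuous_const.mul (continuous_pow _)
      have h := hc.tendsto 1
      simp only [one_pow, mul_one] at h
      exact h.mono_left nhdsWithin_le_nhds
    apply le_of_tendsto htend
    filter_upwards [Ioo_mem_nhdsLT_of_mem
      (show (1:ℝ) ∈ Set.Ioc 0 1 by constructor <;> norm_num)] with s hs
    have hsum := hrealsum s hs
    have htail := (hasSum_nat_add_iff' N).mpr hsum
    have hple := sum_le_hasSum (Finset.range m)
      (fun n _ => mul_nonneg (hbnonneg _ (Nat.le_add_left N n)) (pow_nonneg hs.1.le _)) htail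
    refine le_trans hple ?_
    have hT : (Polynomial.eval (s:ℂ) Gr / Polynomial.eval (s:ℂ) Hr).re ≤ M := by
      refine le_trans (Complex.re_le_norm _) ?_
      exact hM s ⟨hs.1.le, hs.2.le⟩
    have hCb : -C ≤ ∑ i ∈ Finset.range N, bR i * s ^ i := by
      rw [neg_le]
      refine le_trans (neg_le_abs _) ?_
      refine le_trans (Finset.abs_sum_le_sum_abs _ _) ?_
      rw [hCdef]
      apply Finset.sum_le_sum
      intro i _
      rw [abs_mul, abs_pow, abs_of_nonneg hs.1.le]
      calc |bR i| * s ^ i ≤ |bR i| * 1 := by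
            apply mul_le_mul_of_nonneg_left (pow_le_one₀ hs.1.le hs.2.le) (abs_nonneg _)
        _ = |bR i| := mul_one _
    linarith
  have hsummable : Summable (fun n => bR (n + N)) :=
    summable_of_sum_range_le (fun n => hbnonneg _ (Nat.le_add_left N n)) hpartial
  have hsumA' : Summable (fun n => ‖aC (n + N)‖) :=
    Summable.of_nonneg_of_le (fun n => norm_nonneg _)
      (fun n => habsle _ (Nat.le_add_left N n)) hsummable
  have hsumA : Summable (fun n => ‖aC n‖) := by
    rw [← summable_nat_add_iff N]
    exact hsumA'
  set SA : ℝ := ∑' n, ‖aC n‖ with hSAdef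
  have hSA0 : 0 ≤ SA := tsum_nonneg fun n => norm_nonneg _
  -- |Gy/Hy| is bounded by SA on (0,1)
  have hpsib : ∀ s : ℝ, s ∈ Set.Ioo (0:ℝ) 1 →
      ‖Polynomial.eval (s:ℂ) Gy / Polynomial.eval (s:ℂ) Hy‖ ≤ SA := by
    intro s hs
    have habs1 : ‖(s:ℂ)‖ < 1 := by
      rw [Complex.norm_real, Real.norm_of_nonneg hs.1.le]
      exact hs.2
    have h := haysum (s:ℂ) habs1
    have hterm : ∀ n, ‖aC n * (s:ℂ) ^ n‖ ≤ ‖aC n‖ := by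
      intro n
      rw [norm_mul, norm_pow, Complex.norm_real,
        Real.norm_of_nonneg hs.1.le]
      calc ‖aC n‖ * s ^ n ≤ ‖aC n‖ * 1 :=
            mul_le_mul_of_nonneg_left (pow_le_one₀ hs.1.le hs.2.le) (norm_nonneg _)
        _ = _ := mul_one _
    have hsn : Summable (fun n => ‖aC n * (s:ℂ) ^ n‖) :=
      Summable.of_nonneg_of_le (fun n => norm_nonneg _) hterm hsumA
    have hb := norm_tsum_le_tsum_norm hsn
    rw [h.tsum_eq] at hb
    refine le_trans hb ?_
    rw [hSAdef]
    exact Summable.tsum_le_tsum hterm hsn hsumA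
  -- values at 1
  have hGy1 : Polynomial.eval (1:ℂ) Gy = eval y G := by
    rw [hGydef, eval_lineSub]
    have : (fun j => (1:ℂ) * y j) = y := by funext j; rw [one_mul]
    rw [this]
  have hHy1 : Polynomial.eval (1:ℂ) Hy = 0 := by
    rw [hHydef, eval_lineSub]
    have : (fun j => (1:ℂ) * y j) = y := by funext j; rw [one_mul]
    rw [this, hyH]
  set g0 : ℝ := ‖eval y G‖ with hg0def
  have hg0 : 0 < g0 := norm_pos_iff.mpr hGy
  have hcGy : Continuous (fun s : ℝ => ‖Polynomial.eval (s:ℂ) Gy‖) :=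
    continuous_norm.comp (Gy.continuous_aeval.comp Complex.continuous_ofReal)
  have hcHy : Continuous (fun s : ℝ => ‖Polynomial.eval (s:ℂ) Hy‖) :=
    continuous_norm.comp (Hy.continuous_aeval.comp Complex.continuous_ofReal)
  have htG : Filter.Tendsto (fun s : ℝ => ‖Polynomial.eval (s:ℂ) Gy‖)
      (nhdsWithin 1 (Set.Iio 1)) (nhds g0) := by
    have h := hcGy.tendsto 1
    rw [show (((1:ℝ):ℂ)) = (1:ℂ) from Complex.ofReal_one] at h
    rw [hGy1] at h
    exact h.mono_left nhdsWithin_le_nhds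
  have htH : Filter.Tendsto (fun s : ℝ => ‖Polynomial.eval (s:ℂ) Hy‖)
      (nhdsWithin 1 (Set.Iio 1)) (nhds 0) := by
    have h := hcHy.tendsto 1
    rw [show (((1:ℝ):ℂ)) = (1:ℂ) from Complex.ofReal_one] at h
    rw [hHy1, norm_zero] at h
    exact h.mono_left nhdsWithin_le_nhds
  have hev := ((htG.eventually (eventually_gt_nhds (show g0/2 < g0 by linarith))).and
    ((htH.eventually (eventually_lt_nhds
        (show (0:ℝ) < g0/(2*(SA+1)) by positivity))).and
      (Ioo_mem_nhdsLT_of_mem (show (1:ℝ) ∈ Set.Ioc 0 1 by norm_num))))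
  obtain ⟨s, hs1, hs2, hs3⟩ := hev.exists
  have hsabs : ‖(s:ℂ)‖ < 1 := by
    rw [Complex.norm_real, Real.norm_of_nonneg hs3.1.le]
    exact hs3.2
  have habsH : 0 < ‖Polynomial.eval (s:ℂ) Hy‖ :=
    norm_pos_iff.mpr (hQy _ hsabs)
  have hlt : SA < ‖Polynomial.eval (s:ℂ) Gy / Polynomial.eval (s:ℂ) Hy‖ := by
    rw [norm_div, lt_div_iff₀ habsH]
    calc SA * ‖Polynomial.eval (s:ℂ) Hy‖
        ≤ (SA + 1) * ‖Polynomial.eval (s:ℂ) Hy‖ :=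
          mul_le_mul_of_nonneg_right (by linarith) habsH.le
      _ < (SA + 1) * (g0/(2*(SA+1))) := by
          exact mul_lt_mul_of_pos_left hs2 (by linarith)
      _ = g0 / 2 := by
          field_simp
      _ < ‖Polynomial.eval (s:ℂ) Gy‖ := hs1
  exact absurd (hpsib s hs3) (not_le.mpr hlt)
end

section
/- Let H(x,y) = (1-x-y)(20-x-40y) - 1. The system H(x,y) = 0, x·H_x(x,y) - y·H_y(x,y) = 0 has at least two distinct solutions with positive real coordinates. -/
open MvPolynomial

noncomputable def H8 : MvPolynomial (Fin 2) ℝ :=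
  (1 - X 0 - X 1) * (C 20 - X 0 - C 40 * X 1) - 1

/-- The eliminant quartic for the critical-point system. -/
private noncomputable def q8 (x : ℝ) : ℝ :=
  3042*x^4 - 35061*x^3 + 49090*x^2 - 26580*x + 5320

private lemma q8_cont : Continuous q8 := by
  unfold q8; continuity

private lemma root1 : ∃ x : ℝ, 1/2 ≤ x ∧ x ≤ 3/5 ∧ q8 x = 0 := by
  have h := intermediate_value_Icc' (by norm_num : (1/2:ℝ) ≤ 3/5) q8_cont.continuousOn
  have h0 : (0:ℝ) ∈ Set.Icc (q8 (3/5)) (q8 (1/2)) := by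
    constructor <;> (unfold q8; norm_num)
  obtain ⟨x, hx, hfx⟩ := h h0
  exact ⟨x, hx.1, hx.2, hfx⟩

private lemma root2 : ∃ x : ℝ, 9 ≤ x ∧ x ≤ 10 ∧ q8 x = 0 := by
  have h := intermediate_value_Icc (by norm_num : (9:ℝ) ≤ 10) q8_cont.continuousOn
  have h0 : (0:ℝ) ∈ Set.Icc (q8 9) (q8 10) := by
    constructor <;> (unfold q8; norm_num)
  obtain ⟨x, hx, hfx⟩ := h h0
  exact ⟨x, hx.1, hx.2, hfx⟩

/-- Given a root of the quartic with nonvanishing denominator and positive data,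
we get a solution of the system. -/
private lemma solPoint (x : ℝ) (hq : q8 x = 0) (hD : 60 - 82*x ≠ 0) :
    eval ![x, (4*x^2 - 63*x + 38)/(60 - 82*x)] H8 = 0 ∧
    x * eval ![x, (4*x^2 - 63*x + 38)/(60 - 82*x)] (pderiv 0 H8)
      - ((4*x^2 - 63*x + 38)/(60 - 82*x)) *
        eval ![x, (4*x^2 - 63*x + 38)/(60 - 82*x)] (pderiv 1 H8) = 0 := by
  unfold q8 at hq
  constructor
  · simp only [H8]
    simp
    field_simp
    have hD' : 60 - x * 82 ≠ 0 := by contrapose! hD; linarith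
    field_simp
    linear_combination (-2:ℝ) * hq
  · simp only [H8, pderiv_mul]
    simp
    field_simp
    have hD' : 60 - x * 82 ≠ 0 := by contrapose! hD; linarith
    field_simp
    linear_combination (4:ℝ) * hq

/-- The critical point system for H = (1-x-y)(20-x-40y)-1 in direction (1,1)
has at least two distinct solutions with positive real coordinates. -/
theorem stmt8 :
    ∃ w v : Fin 2 → ℝ, w ≠ v ∧
      (∀ j, 0 < w j) ∧ (∀ j, 0 < v j) ∧
      eval w H8 = 0 ∧
      w 0 * eval w (pderiv 0 H8) - w 1 * eval w (pderiv 1 H8) = 0 ∧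
      eval v H8 = 0 ∧
      v 0 * eval v (pderiv 0 H8) - v 1 * eval v (pderiv 1 H8) = 0 := by
  obtain ⟨a, ha1, ha2, hqa⟩ := root1
  obtain ⟨b, hb1, hb2, hqb⟩ := root2
  have hDa : 60 - 82*a ≠ 0 := by nlinarith
  have hDb : 60 - 82*b ≠ 0 := by nlinarith
  set ya := (4*a^2 - 63*a + 38)/(60 - 82*a) with hya
  set yb := (4*b^2 - 63*b + 38)/(60 - 82*b) with hyb
  have hyapos : 0 < ya := by
    rw [hya]
    apply div_pos <;> nlinarith
  have hybpos : 0 < yb := by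
    rw [hyb]
    have hnum : 4*b^2 - 63*b + 38 < 0 := by nlinarith [(b-9)*(10-b)]
    have hden : 60 - 82*b < 0 := by nlinarith
    exact div_pos_of_neg_of_neg hnum hden
  obtain ⟨hHa, hGa⟩ := solPoint a hqa hDa
  obtain ⟨hHb, hGb⟩ := solPoint b hqb hDb
  refine ⟨![a, ya], ![b, yb], ?_, ?_, ?_, hHa, hGa, hHb, hGb⟩
  · intro h
    have : a = b := by
      have := congrFun h 0
      simpa using this
    nlinarith
  · intro j
    fin_cases j <;> simp <;> [nlinarith; exact hyapos]
  · intro j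
    fin_cases j <;> simp <;> [nlinarith; exact hybpos]
end

section
/- Let H ∈ R[z1,...,zd] with H(0) ≠ 0, and suppose the power series of 1/H at the origin has nonnegative coefficients with positive radius of convergence. If w ∈ R_{>0}^d is a zero of H that is coordinate-wise closest to the origin among positive real zeros along its ray (i.e., H(tw) ≠ 0 for all t ∈ (0,1)), and there is no other zero y of H with |y_j| < w_j for all j, then the power series of 1/H converges at every point z with |z_j| < w_j for all j. -/
set_option maxHeartbeats 1000000

open MvPolynomial

lemma fiber_finite (d n : ℕ) : Finite {i : Fin d →₀ ℕ // (∑ j, i j) = n} := by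
  refine Finite.of_injective
    (fun i => (fun j => (⟨i.1 j, ?_⟩ : Fin (n+1))) : _ → (Fin d → Fin (n+1))) ?_
  · have : i.1 j ≤ ∑ j', i.1 j' := Finset.single_le_sum
      (fun j' _ => Nat.zero_le _) (Finset.mem_univ j)
    exact Nat.lt_succ_of_le (by rw [i.2] at this; exact this)
  · intro a b hab
    apply Subtype.ext
    apply Finsupp.ext
    intro j
    exact congrArg Fin.val (congrFun hab j)

lemma ofScalars_coeff (c : ℕ → ℂ) (n : ℕ) :
    (FormalMultilinearSeries.ofScalars ℂ c).coeff n = c n := by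
  simp [FormalMultilinearSeries.coeff, FormalMultilinearSeries.ofScalars, List.prod_ofFn]

/-- If 1/H has a nonnegative power series expansion at the origin, w is a
positive real zero of H minimal along its ray and with no zero of H
coordinatewise strictly smaller in modulus, then the series converges on the
open polydisc {z : |z_j| < w_j}. -/
theorem stmt11 (d : ℕ) (H : MvPolynomial (Fin d) ℝ) (h0 : eval 0 H ≠ 0)
    (f : (Fin d →₀ ℕ) → ℝ) (hf : ∀ i, 0 ≤ f i) (ε : ℝ) (hε : 0 < ε)
    (hconv : ∀ z : Fin d → ℂ, (∀ j, ‖z j‖ < ε) →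
      HasSum (fun i : Fin d →₀ ℕ => (f i : ℂ) * ∏ j, z j ^ i j)
        (1 / eval z (map Complex.ofRealHom H)))
    (w : Fin d → ℝ) (hw : ∀ j, 0 < w j) (hwH : eval w H = 0)
    (hray : ∀ t : ℝ, 0 < t → t < 1 → eval (fun j => t * w j) H ≠ 0)
    (hmin : ¬ ∃ y : Fin d → ℂ, eval y (map Complex.ofRealHom H) = 0 ∧
      ∀ j, ‖y j‖ < w j) :
    ∀ z : Fin d → ℂ, (∀ j, ‖z j‖ < w j) →
      Summable (fun i : Fin d →₀ ℕ => (f i : ℂ) * ∏ j, z j ^ i j) := by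
  intro z hz
  rcases Nat.eq_zero_or_pos d with hd | hd
  · subst hd
    haveI : Subsingleton (Fin 0 →₀ ℕ) := ⟨fun a b => Finsupp.ext fun j => j.elim0⟩
    haveI : Finite (Fin 0 →₀ ℕ) := Finite.of_subsingleton
    exact Summable.of_finite
  haveI : Nonempty (Fin d) := ⟨⟨0, hd⟩⟩
  set r : Fin d → ℝ := fun j => ‖z j‖ with hr
  set s : Fin d → ℝ := fun j => (r j + w j) / 2 with hsdef
  have hr0 : ∀ j, 0 ≤ r j := fun j => norm_nonneg _
  have hrs : ∀ j, r j < s j := fun j => by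
    simp only [hsdef]; linarith [hz j]
  have hsw : ∀ j, s j < w j := fun j => by
    simp only [hsdef]; linarith [hz j]
  have hs0 : ∀ j, 0 < s j := fun j => lt_of_le_of_lt (hr0 j) (hrs j)
  -- the radius
  set R : ℝ := Finset.univ.inf' Finset.univ_nonempty (fun j => w j / s j) with hRdef
  have hR1 : 1 < R := by
    rw [hRdef, Finset.lt_inf'_iff]
    exact fun j _ => (one_lt_div (hs0 j)).mpr (hsw j)
  have hRs : ∀ j, R * s j ≤ w j := fun j => by
    have : R ≤ w j / s j := Finset.inf'_le _ (Finset.mem_univ j)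
    calc R * s j ≤ (w j / s j) * s j := by
          exact mul_le_mul_of_nonneg_right this (hs0 j).le
      _ = w j := div_mul_cancel₀ (w j) (hs0 j).ne'
  set Hc : MvPolynomial (Fin d) ℂ := map Complex.ofRealHom H with hHc
  set P : ℂ → ℂ := fun t => eval (fun j => t * (s j : ℂ)) Hc with hP
  have hne : ∀ t : ℂ, ‖t‖ < R → P t ≠ 0 := by
    intro t ht hzero
    exact hmin ⟨fun j => t * (s j : ℂ), hzero, fun j => by
      rw [norm_mul, Complex.norm_real, Real.norm_eq_abs, abs_of_pos (hs0 j)]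
      calc ‖t‖ * s j < R * s j :=
            mul_lt_mul_of_pos_right ht (hs0 j)
        _ ≤ w j := hRs j⟩
  have hPdiff : Differentiable ℂ P := by
    have : P = fun t => ∑ i ∈ Hc.support, Hc.coeff i * ∏ j, (t * (s j : ℂ)) ^ i j := by
      funext t; rw [hP]; exact eval_eq' _ _
    rw [this]
    apply Differentiable.fun_sum
    intro i _
    apply Differentiable.const_mul
    apply Differentiable.fun_finsetProd
    intro j _
    exact (differentiable_id.mul_const _).pow _
  set g : ℂ → ℂ := fun t => (P t)⁻¹ with hg
  have hRnn : (0:ℝ) < R := lt_trans one_pos hR1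
  set ρ : NNReal := ⟨(1 + R) / 2, by positivity⟩ with hρdef
  have hρ1 : (1:ℝ) < ρ := by rw [hρdef]; show (1:ℝ) < (1+R)/2; linarith
  have hρR : (ρ:ℝ) < R := by rw [hρdef]; show (1+R)/2 < R; linarith
  have hgd : DifferentiableOn ℂ g (Metric.closedBall 0 ρ) := by
    apply DifferentiableOn.inv hPdiff.differentiableOn
    intro t ht
    apply hne
    rw [Metric.mem_closedBall, dist_zero_right] at ht
    exact lt_of_le_of_lt ht hρR
  have hball := hgd.hasFPowerSeriesOnBall (by exact_mod_cast lt_trans one_pos hρ1)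
  set p := cauchyPowerSeries g 0 ρ with hpdef
  have hp : HasFPowerSeriesAt g p 0 := hball.hasFPowerSeriesAt
  -- fibers
  haveI : ∀ n, Finite {i : Fin d →₀ ℕ // (∑ j, i j) = n} := fiber_finite d
  letI : ∀ n, Fintype {i : Fin d →₀ ℕ // (∑ j, i j) = n} := fun n => Fintype.ofFinite _
  set F : (Fin d →₀ ℕ) → ℝ := fun i => f i * ∏ j, s j ^ i j with hFdef
  have hF0 : ∀ i, 0 ≤ F i := fun i => mul_nonneg (hf i)
    (Finset.prod_nonneg fun j _ => pow_nonneg (hs0 j).le _)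
  set c : ℕ → ℝ := fun n => ∑ i : {i : Fin d →₀ ℕ // (∑ j, i j) = n}, F i.1 with hcdef
  have hc0 : ∀ n, 0 ≤ c n := fun n => Finset.sum_nonneg fun i _ => hF0 _
  -- fiber sums at parameter t
  have hfiber : ∀ (t : ℂ) (n : ℕ),
      HasSum (fun i : {i : Fin d →₀ ℕ // (∑ j, i j) = n} =>
        (f i.1 : ℂ) * ∏ j, (t * (s j : ℂ)) ^ i.1 j) (t ^ n • (c n : ℂ)) := by
    intro t n
    have := hasSum_fintype (fun i : {i : Fin d →₀ ℕ // (∑ j, i j) = n} =>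
        (f i.1 : ℂ) * ∏ j, (t * (s j : ℂ)) ^ i.1 j)
    convert this using 1
    rw [smul_eq_mul]
    have hterm : ∀ i : {i : Fin d →₀ ℕ // (∑ j, i j) = n},
        (f i.1 : ℂ) * ∏ j, (t * (s j : ℂ)) ^ i.1 j
          = t ^ n * ((f i.1 : ℂ) * ∏ j, (s j : ℂ) ^ i.1 j) := by
      intro i
      have h1 : ∏ j, (t * (s j : ℂ)) ^ i.1 j
          = t ^ (∑ j, i.1 j) * ∏ j, (s j : ℂ) ^ i.1 j := by
        simp_rw [mul_pow]
        rw [Finset.prod_mul_distrib, Finset.prod_pow_eq_pow_sum]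
      rw [i.2] at h1
      rw [h1]; ring
    rw [Finset.sum_congr rfl (fun i _ => hterm i), ← Finset.mul_sum]
    congr 1
    rw [hcdef]
    push_cast [hFdef]
    rfl
  -- the small-ball identity
  set S : ℝ := Finset.univ.sup' Finset.univ_nonempty s with hSdef
  have hS0 : 0 < S := lt_of_lt_of_le (hs0 (Classical.arbitrary _))
    (Finset.le_sup' _ (Finset.mem_univ _))
  have hsmall : ∀ t : ℂ, ‖t‖ < ε / S →
      HasSum (fun n => t ^ n • ((c n : ℝ) : ℂ)) (g t) := by
    intro t ht
    have hzj : ∀ j, ‖t * (s j : ℂ)‖ < ε := by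
      intro j
      rw [norm_mul, Complex.norm_real, Real.norm_eq_abs, abs_of_pos (hs0 j)]
      calc ‖t‖ * s j ≤ ‖t‖ * S :=
            mul_le_mul_of_nonneg_left (Finset.le_sup' _ (Finset.mem_univ j))
              (norm_nonneg _)
        _ < (ε / S) * S := mul_lt_mul_of_pos_right ht hS0
        _ = ε := by field_simp
    have h1 := hconv (fun j => t * (s j : ℂ)) hzj
    rw [one_div] at h1
    have h2 : HasSum (fun x : (Σ n : ℕ, {i : Fin d →₀ ℕ // (∑ j, i j) = n}) =>
        (f x.2.1 : ℂ) * ∏ j, (t * (s j : ℂ)) ^ x.2.1 j) (g t) := by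
      simpa [Function.comp_def] using
        (((Equiv.sigmaFiberEquiv (fun i : Fin d →₀ ℕ => ∑ j, i j)).hasSum_iff).mpr h1)
    exact h2.sigma fun n => hfiber t n
  -- q = p
  have hq : HasFPowerSeriesAt g
      (FormalMultilinearSeries.ofScalars ℂ (fun n => ((c n : ℝ) : ℂ))) 0 := by
    rw [hasFPowerSeriesAt_iff]
    rw [Metric.eventually_nhds_iff]
    refine ⟨ε / S, div_pos hε hS0, fun t ht => ?_⟩
    rw [dist_zero_right] at ht
    simpa [ofScalars_coeff] using hsmall t ht
  have hpq : FormalMultilinearSeries.ofScalars ℂ (fun n => ((c n : ℝ) : ℂ)) = p :=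
    hq.eq_formalMultilinearSeries hp
  -- summability of c
  have hrad : ((1 : NNReal) : ENNReal) < p.radius := by
    refine lt_of_lt_of_le ?_ hball.r_le
    rw [ENNReal.coe_lt_coe]
    exact_mod_cast hρ1
  have hsum_c : Summable c := by
    have := p.summable_norm_mul_pow hrad
    simp only [NNReal.coe_one, one_pow, mul_one] at this
    rw [← hpq] at this
    refine this.congr fun n => ?_
    rw [FormalMultilinearSeries.norm_apply_eq_norm_coef, ofScalars_coeff]
    simp [abs_of_nonneg (hc0 n)]
  -- summability of F
  have hsumF : Summable F := by
    have hsig : Summable (fun x : (Σ n : ℕ, {i : Fin d →₀ ℕ // (∑ j, i j) = n}) =>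
        F x.2.1) := by
      rw [summable_sigma_of_nonneg (fun x => hF0 _)]
      refine ⟨fun n => Summable.of_finite, ?_⟩
      refine hsum_c.congr fun n => ?_
      rw [hcdef]
      simp [tsum_fintype]
    exact ((Equiv.sigmaFiberEquiv (fun i : Fin d →₀ ℕ => ∑ j, i j)).summable_iff).mp hsig
  -- conclude
  apply Summable.of_norm_bounded hsumF
  intro i
  rw [norm_mul, Complex.norm_real, Real.norm_eq_abs, abs_of_nonneg (hf i), hFdef]
  apply mul_le_mul_of_nonneg_left _ (hf i)
  rw [norm_prod]
  apply Finset.prod_le_prod (fun j _ => norm_nonneg _)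
  intro j _
  rw [norm_pow]
  exact pow_le_pow_left₀ (norm_nonneg _) (hrs j).le _
end
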